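/- arXiv:1612.06475 — 2 statements merged into one kernel-verified Lean document; each statement's English description precedes it below -/
import Mathlib

section
/- Completeness of the transition system at the initial configuration: t*(initial) = t_G, the gold tree is derivable, t_G ∈ D(initial), and the best achievable F1 from the initial configuration is perfect, F1(initial) = 1. -/
/-!
Formalization of the span-based Structure/Label transition parsing system of
Cross & Huang (2016), "Span-Based Constituency Parsing with a Structure-Label
System and Provably Optimal Dynamic Oracles".

A configuration is `(z, σ, t)` where `z` is the step number, `σ` the stack of
span boundaries and `t` the set of brackets built so far.  A bracket is a
triple `(X, i, j)` with `X` a nonterminal label and `i < j ≤ n` a span.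
-/

namespace SpanParser

structure Config (N : Type*) where
  z : ℕ
  σ : List ℕ
  t : Finset (N × ℕ × ℕ)

variable {N : Type*}

/-- The span of a bracket. -/
def span (b : N × ℕ × ℕ) : ℕ × ℕ := b.2

/-- Top (rightmost) boundary of the stack. -/
def topJ (σ : List ℕ) : ℕ := σ.getLastD 0

/-- Second-to-top boundary of the stack. -/
def topI (σ : List ℕ) : ℕ := σ.dropLast.getLastD 0

/-- Parser actions: shift, combine, label-`X`, and nolabel. -/
inductive Action (N : Type*) where
  | sh : Action N
  | comb : Action N
  | label : N → Action N
  | nolabel : Action N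

variable [DecidableEq N]

/-- Applicability of an action at a configuration (for sentence length `n`). -/
def App (n : ℕ) (c : Config N) : Action N → Prop
  | .sh      => Even c.z ∧ c.σ ≠ [] ∧ topJ c.σ < n
  | .comb    => Even c.z ∧ 3 ≤ c.σ.length
  | .label _ => Odd c.z ∧ 2 ≤ c.σ.length
  | .nolabel => Odd c.z ∧ 2 ≤ c.σ.length ∧ c.z < 4 * n - 1

/-- The result `τ(c)` of applying action `τ` to configuration `c`. -/
def doAct (c : Config N) : Action N → Config N
  | .sh      => ⟨c.z + 1, c.σ ++ [topJ c.σ + 1], c.t⟩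
  | .comb    => ⟨c.z + 1, c.σ.dropLast.dropLast ++ [topJ c.σ], c.t⟩
  | .label X => ⟨c.z + 1, c.σ, insert (X, topI c.σ, topJ c.σ) c.t⟩
  | .nolabel => ⟨c.z + 1, c.σ, c.t⟩

/-- The initial configuration `(0, [0], ∅)`. -/
def initial (N : Type*) : Config N := ⟨0, [0], ∅⟩

/-- One transition step `c ⊢ c'`. -/
def Step (n : ℕ) (c c' : Config N) : Prop := ∃ a, App n c a ∧ c' = doAct c a

/-- `⊢*`: reflexive-transitive closure of the transition relation. -/
def Reaches (n : ℕ) : Config N → Config N → Prop := Relation.ReflTransGen (Step n)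

/-- A configuration is valid if it is reachable from the initial configuration. -/
def Valid (n : ℕ) (c : Config N) : Prop := Reaches n (initial N) c

/-- A final configuration: `σ = [0, n]` and `z = 4n - 2`. -/
def Final (n : ℕ) (c : Config N) : Prop := c.σ = [0, n] ∧ c.z = 4 * n - 2

/-- `D(c)`: the set of trees of final configurations reachable from `c`. -/
def Dset (n : ℕ) (c : Config N) : Set (Finset (N × ℕ × ℕ)) :=
  {t' | ∃ c', Reaches n c c' ∧ Final n c' ∧ c'.t = t'}

/-- `(i,j) ⪯ (p,q)`: span `(i,j)` is encompassed by `(p,q)`, i.e. `p ≤ i < j ≤ q`. -/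
def Enc (s₁ s₂ : ℕ × ℕ) : Prop := s₂.1 ≤ s₁.1 ∧ s₁.1 < s₁.2 ∧ s₁.2 ≤ s₂.2

/-- `(i,j) ≺ (p,q)`: strict encompassment. -/
def SEnc (s₁ s₂ : ℕ × ℕ) : Prop := Enc s₁ s₂ ∧ s₁ ≠ s₂

/-- `tG` is a gold tree for sentence length `n`: valid spans, pairwise-distinct
spans, pairwise non-crossing spans, and exactly one bracket with span `(0, n)`
(uniqueness follows from distinctness of spans). -/
structure IsGold (n : ℕ) (tG : Finset (N × ℕ × ℕ)) : Prop where
  validSpans : ∀ b ∈ tG, (span b).1 < (span b).2 ∧ (span b).2 ≤ n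
  distinctSpans : ∀ b₁ ∈ tG, ∀ b₂ ∈ tG, span b₁ = span b₂ → b₁ = b₂
  noncrossing : ∀ b₁ ∈ tG, ∀ b₂ ∈ tG,
    Enc (span b₁) (span b₂) ∨ Enc (span b₂) (span b₁) ∨
    (span b₁).2 ≤ (span b₂).1 ∨ (span b₂).2 ≤ (span b₁).1
  root : ∃ X, (X, 0, n) ∈ tG

open Classical in
/-- `left(c)`: gold brackets (strictly, at even steps) encompassing the top
span whose left boundary occurs on the stack. -/
noncomputable def leftSet (tG : Finset (N × ℕ × ℕ)) (c : Config N) :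
    Finset (N × ℕ × ℕ) :=
  tG.filter fun b =>
    (if Even c.z then SEnc (topI c.σ, topJ c.σ) (span b)
     else Enc (topI c.σ, topJ c.σ) (span b)) ∧ (span b).1 ∈ c.σ

open Classical in
/-- `right(c)`: gold brackets entirely on the queue. -/
noncomputable def rightSet (tG : Finset (N × ℕ × ℕ)) (c : Config N) :
    Finset (N × ℕ × ℕ) :=
  tG.filter fun b => topJ c.σ ≤ (span b).1

open Classical in
/-- `reach(c)`: the reachable gold brackets (all of `t_G` at the initial
configuration, whose stack has fewer than two boundaries). -/
noncomputable def reach (tG : Finset (N × ℕ × ℕ)) (c : Config N) :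
    Finset (N × ℕ × ℕ) :=
  if c.σ.length < 2 then tG else leftSet tG c ∪ rightSet tG c

/-- The optimal tree `t*(c) = t ∪ reach(c)`. -/
noncomputable def tstar (tG : Finset (N × ℕ × ℕ)) (c : Config N) :
    Finset (N × ℕ × ℕ) :=
  c.t ∪ reach tG c

/-- `b = next(c)`: the `≺`-minimal element of `left(c)`. -/
def IsNext (tG : Finset (N × ℕ × ℕ)) (c : Config N) (b : N × ℕ × ℕ) : Prop :=
  b ∈ leftSet tG c ∧ ∀ b' ∈ leftSet tG c, Enc (span b) (span b')

/-- The dynamic-oracle policy `dyna(c)` as a predicate on actions. -/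
def Dyna (tG : Finset (N × ℕ × ℕ)) (c : Config N) (a : Action N) : Prop :=
  if c.σ.length < 2 then a = Action.sh
  else if Even c.z then
    ∃ b, IsNext tG c b ∧
      (((span b).1 = topI c.σ ∧ topJ c.σ < (span b).2 ∧ a = Action.sh) ∨
       ((span b).1 < topI c.σ ∧ (span b).2 = topJ c.σ ∧ a = Action.comb) ∨
       ((span b).1 < topI c.σ ∧ topJ c.σ < (span b).2 ∧
          (a = Action.sh ∨ a = Action.comb)))
  else
    (∃ X, (X, topI c.σ, topJ c.σ) ∈ tG ∧ a = Action.label X) ∨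
    ((∀ X, (X, topI c.σ, topJ c.σ) ∉ tG) ∧ a = Action.nolabel)

/-- `F1` of a predicted bracket set `t'` against the gold tree `tG`
(`0` when `t' ∩ tG = ∅`). -/
noncomputable def f1 (tG t' : Finset (N × ℕ × ℕ)) : ℝ :=
  if t' ∩ tG = ∅ then 0
  else
    (2 * (((t' ∩ tG).card : ℝ) / (tG.card : ℝ)) * (((t' ∩ tG).card : ℝ) / (t'.card : ℝ))) /
      ((((t' ∩ tG).card : ℝ) / (tG.card : ℝ)) + (((t' ∩ tG).card : ℝ) / (t'.card : ℝ)))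

/-- `F1(c)`: the best `F1` among trees reachable from `c`. -/
noncomputable def configF1 (n : ℕ) (tG : Finset (N × ℕ × ℕ)) (c : Config N) : ℝ :=
  sSup (f1 tG '' Dset n c)

/-- A run of (applicable) actions from one configuration to another. -/
inductive Run (n : ℕ) : Config N → List (Action N) → Config N → Prop
  | refl (c : Config N) : Run n c [] c
  | step {c c' : Config N} {as : List (Action N)} (a : Action N)
      (happ : App n c a) (h : Run n (doAct c a) as c') : Run n c (a :: as) c'

/-- A run all of whose actions follow the dynamic oracle. -/
inductive DynaRun (n : ℕ) (tG : Finset (N × ℕ × ℕ)) : Config N → Config N → Prop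
  | refl (c : Config N) : DynaRun n tG c c
  | step {c c' : Config N} (a : Action N) (happ : App n c a) (hdyna : Dyna tG c a)
      (h : DynaRun n tG (doAct c a) c') : DynaRun n tG c c'

def isSh : Action N → Bool
  | .sh => true
  | _ => false

def isComb : Action N → Bool
  | .comb => true
  | _ => false

/-- Label-step actions: `label-X` or `nolabel`. -/
def isLabelStep : Action N → Bool
  | .label _ => true
  | .nolabel => true
  | _ => false



section AuxCompleteness

lemma topJ_concat (σ : List ℕ) (a : ℕ) : topJ (σ ++ [a]) = a :=
  List.getLastD_concat

lemma topI_concat2 (σ : List ℕ) (a b : ℕ) : topI (σ ++ [a, b]) = a := by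
  have h : σ ++ [a, b] = (σ ++ [a]) ++ [b] := by simp
  rw [topI, h, List.dropLast_concat, ← topJ, topJ_concat]

lemma reaches_head {n : ℕ} {c c' : Config N} (a : Action N) (h1 : App n c a)
    (h2 : Reaches n (doAct c a) c') : Reaches n c c' :=
  Relation.ReflTransGen.head ⟨a, h1, rfl⟩ h2

lemma label_step (n : ℕ) (tG : Finset (N × ℕ × ℕ)) (hG : IsGold n tG)
    (i j z : ℕ) (hz : Odd z) (hzlt : z < 4 * n - 1) (σ : List ℕ)
    (t : Finset (N × ℕ × ℕ)) :
    Reaches n ⟨z, σ ++ [i, j], t⟩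
      ⟨z + 1, σ ++ [i, j], t ∪ tG.filter (fun b => b.2 = (i, j))⟩ := by
  have hlen : 2 ≤ (σ ++ [i, j]).length := by simp
  have hI : topI (σ ++ [i, j]) = i := topI_concat2 σ i j
  have hJ : topJ (σ ++ [i, j]) = j := by
    have h : σ ++ [i, j] = (σ ++ [i]) ++ [j] := by simp
    rw [h, topJ_concat]
  by_cases hX : ∃ X, (X, i, j) ∈ tG
  · obtain ⟨X, hXm⟩ := hX
    refine reaches_head (.label X) ⟨hz, hlen⟩ ?_
    have hfil : tG.filter (fun b => b.2 = (i, j)) = {(X, i, j)} := by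
      ext b
      simp only [Finset.mem_filter, Finset.mem_singleton]
      constructor
      · rintro ⟨hb, hb2⟩
        exact hG.distinctSpans b hb (X, i, j) hXm hb2
      · rintro rfl; exact ⟨hXm, rfl⟩
    have : doAct (⟨z, σ ++ [i, j], t⟩ : Config N) (.label X)
        = ⟨z + 1, σ ++ [i, j], t ∪ tG.filter (fun b => b.2 = (i, j))⟩ := by
      simp only [doAct, hI, hJ, hfil]
      congr 1
      rw [Finset.insert_eq, Finset.union_comm]
    rw [this]
    exact Relation.ReflTransGen.refl
  · push_neg at hX
    refine reaches_head .nolabel ⟨hz, hlen, hzlt⟩ ?_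
    have hfil : tG.filter (fun b => b.2 = (i, j)) = ∅ := by
      apply Finset.filter_eq_empty_iff.mpr
      intro b hb hb2
      have hb' : b = (b.1, i, j) := by rw [← hb2]
      exact hX b.1 (hb' ▸ hb)
    rw [hfil, Finset.union_empty]
    exact Relation.ReflTransGen.refl

lemma parse_run (n : ℕ) (hn : 1 ≤ n) (tG : Finset (N × ℕ × ℕ)) (hG : IsGold n tG) :
    ∀ L i j, j - i = L → i < j → j ≤ n →
    ∀ z : ℕ, Even z → z + 4 * (j - i) ≤ 4 * n →
    ∀ (σ : List ℕ) (t : Finset (N × ℕ × ℕ)),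
      Reaches n ⟨z, σ ++ [i], t⟩
        ⟨z + (4 * (j - i) - 2), σ ++ [i, j],
          t ∪ tG.filter (fun b => i ≤ b.2.1 ∧ b.2.2 ≤ j)⟩ := by
  intro L
  induction L using Nat.strong_induction_on with
  | _ L IH =>
  intro i j hL hij hjn z hzE hzn σ t
  obtain ⟨m, hm⟩ := hzE
  by_cases hbase : j = i + 1
  · -- base case: shift then label
    subst hbase
    refine reaches_head .sh ⟨⟨m, hm⟩, by simp, ?_⟩ ?_
    · rw [topJ_concat]; omega
    · show Reaches n ⟨z + 1, (σ ++ [i]) ++ [topJ (σ ++ [i]) + 1], t⟩ _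
      rw [topJ_concat]
      have hstack : (σ ++ [i]) ++ [i + 1] = σ ++ [i, i + 1] := by simp
      rw [hstack]
      have h := label_step n tG hG i (i + 1) (z + 1)
        (⟨m, by omega⟩) (by omega) σ t
      have hcfg : (⟨z + (4 * (i + 1 - i) - 2), σ ++ [i, i + 1],
            t ∪ tG.filter (fun b => i ≤ b.2.1 ∧ b.2.2 ≤ i + 1)⟩ : Config N)
          = ⟨z + 1 + 1, σ ++ [i, i + 1],
            t ∪ tG.filter (fun b => b.2 = (i, i + 1))⟩ := by
        have hz2 : z + (4 * (i + 1 - i) - 2) = z + 1 + 1 := by omega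
        rw [hz2]
        have hfil : tG.filter (fun b => i ≤ b.2.1 ∧ b.2.2 ≤ i + 1)
            = tG.filter (fun b => b.2 = (i, i + 1)) := by
          apply Finset.filter_congr
          intro b hb
          have hv := hG.validSpans b hb
          simp only [span] at hv
          constructor
          · rintro ⟨h1, h2⟩
            have e1 : b.2.1 = i := by omega
            have e2 : b.2.2 = i + 1 := by omega
            rw [show b.2 = (b.2.1, b.2.2) from rfl, e1, e2]
          · intro h
            have e1 : b.2.1 = i := by rw [h]
            have e2 : b.2.2 = i + 1 := by rw [h]
            omega
        rw [hfil]
      rw [hcfg]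
      exact h
  · -- recursive case
    have hij2 : i + 1 < j := by omega
    have hex : ∃ k, i < k ∧ k < j ∧ ∀ b ∈ tG, i ≤ b.2.1 → b.2.2 ≤ j →
        b.2 ≠ (i, j) → b.2.2 ≤ k ∨ k ≤ b.2.1 := by
      set P : Finset ℕ :=
        (tG.filter fun b => i < b.2.1 ∧ b.2.2 = j).image (fun b => b.2.1) with hP
      have hmemP : ∀ b ∈ tG, i < b.2.1 → b.2.2 = j → b.2.1 ∈ P := by
        intro b hb h1 h2
        rw [hP, Finset.mem_image]
        exact ⟨b, Finset.mem_filter.mpr ⟨hb, h1, h2⟩, rfl⟩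
      by_cases hne : P.Nonempty
      · obtain ⟨bk, hbk, hbke⟩ := Finset.mem_image.mp (P.min'_mem hne)
        rw [Finset.mem_filter] at hbk
        have hvk := hG.validSpans bk hbk.1
        simp only [span] at hvk
        refine ⟨P.min' hne, by omega, by rw [← hbke]; omega, ?_⟩
        intro b hb h1 h2 h3
        by_contra hcon
        push_neg at hcon
        obtain ⟨hc1, hc2⟩ := hcon
        have hv := hG.validSpans b hb
        simp only [span] at hv
        rcases hG.noncrossing b hb bk hbk.1 with hc | hc | hc | hc
        · simp only [Enc, span] at hc
          omega
        · simp only [Enc, span] at hc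
          rw [hbke, hbk.2.2] at hc
          have hq : b.2.2 = j := by omega
          have hpi : b.2.1 = i ∨ i < b.2.1 := by omega
          rcases hpi with hpi | hpi
          · exact h3 (by rw [show b.2 = (b.2.1, b.2.2) from rfl, hpi, hq])
          · have := P.min'_le _ (hmemP b hb hpi hq); omega
        · simp only [Enc, span] at hc
          omega
        · simp only [Enc, span] at hc
          rw [hbk.2.2] at hc
          omega
      · refine ⟨j - 1, by omega, by omega, ?_⟩
        intro b hb h1 h2 h3
        by_contra hcon
        push_neg at hcon
        obtain ⟨hc1, hc2⟩ := hcon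
        have hq : b.2.2 = j := by omega
        have hpi : b.2.1 = i ∨ i < b.2.1 := by omega
        rcases hpi with hpi | hpi
        · exact h3 (by rw [show b.2 = (b.2.1, b.2.2) from rfl, hpi, hq])
        · exact hne ⟨b.2.1, hmemP b hb hpi hq⟩
    obtain ⟨k, hik1, hik2, hcrossfree⟩ := hex
    -- the three bracket sets
    set A := tG.filter (fun b => i ≤ b.2.1 ∧ b.2.2 ≤ k) with hA
    set B := tG.filter (fun b => k ≤ b.2.1 ∧ b.2.2 ≤ j) with hB
    set C := tG.filter (fun b => b.2 = (i, j)) with hC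
    have hsplit : (A ∪ B) ∪ C = tG.filter (fun b => i ≤ b.2.1 ∧ b.2.2 ≤ j) := by
      ext b
      simp only [hA, hB, hC, Finset.mem_union, Finset.mem_filter]
      constructor
      · rintro ((⟨hb, h1, h2⟩ | ⟨hb, h1, h2⟩) | ⟨hb, h1⟩)
        · exact ⟨hb, by omega⟩
        · exact ⟨hb, by omega⟩
        · refine ⟨hb, ?_⟩
          rw [h1]
          exact ⟨le_refl i, le_refl j⟩
      · rintro ⟨hb, h1, h2⟩
        by_cases hbij : b.2 = (i, j)
        · exact Or.inr ⟨hb, hbij⟩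
        · rcases hcrossfree b hb h1 h2 hbij with h | h
          · exact Or.inl (Or.inl ⟨hb, h1, h⟩)
          · exact Or.inl (Or.inr ⟨hb, h, h2⟩)
    -- run 1: parse (i, k)
    have R1 := IH (k - i) (by omega) i k rfl hik1 (by omega) z ⟨m, hm⟩
      (by omega) σ t
    -- run 2: parse (k, j)
    have R2 := IH (j - k) (by omega) k j rfl hik2 hjn (z + (4 * (k - i) - 2))
      ⟨m + 2 * (k - i) - 1, by omega⟩ (by omega) (σ ++ [i]) (t ∪ A)
    set z2 := z + (4 * (k - i) - 2) + (4 * (j - k) - 2) with hz2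
    have hstack1 : σ ++ [i, k] = (σ ++ [i]) ++ [k] := by simp
    have hstack2 : (σ ++ [i]) ++ [k, j] = σ ++ [i, k, j] := by simp
    rw [hstack1] at R1
    rw [hstack2] at R2
    -- run 3: comb then label
    have R3 : Reaches n ⟨z2, σ ++ [i, k, j], (t ∪ A) ∪ B⟩
        ⟨z + (4 * (j - i) - 2), σ ++ [i, j],
          t ∪ tG.filter (fun b => i ≤ b.2.1 ∧ b.2.2 ≤ j)⟩ := by
      have hEz2 : Even z2 := ⟨m + 2 * (j - i) - 2, by omega⟩
      refine reaches_head .comb ⟨hEz2, by simp⟩ ?_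
      have hdo : doAct (⟨z2, σ ++ [i, k, j], (t ∪ A) ∪ B⟩ : Config N) .comb
          = ⟨z2 + 1, σ ++ [i, j], (t ∪ A) ∪ B⟩ := by
        simp only [doAct]
        congr 1
        have e1 : σ ++ [i, k, j] = ((σ ++ [i]) ++ [k]) ++ [j] := by simp
        rw [e1, List.dropLast_concat, List.dropLast_concat, topJ_concat]
        simp
      rw [hdo]
      have h := label_step n tG hG i j (z2 + 1)
        ⟨m + 2 * (j - i) - 2, by omega⟩ (by omega) σ ((t ∪ A) ∪ B)
      have hcfg : (⟨z + (4 * (j - i) - 2), σ ++ [i, j],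
            t ∪ tG.filter (fun b => i ≤ b.2.1 ∧ b.2.2 ≤ j)⟩ : Config N)
          = ⟨z2 + 1 + 1, σ ++ [i, j], ((t ∪ A) ∪ B) ∪ C⟩ := by
        have hzz : z + (4 * (j - i) - 2) = z2 + 1 + 1 := by omega
        rw [hzz]
        congr 1
        rw [← hsplit]
        ext b
        simp only [Finset.mem_union]
        tauto
      rw [hcfg]
      exact h
    exact R1.trans (R2.trans R3)

lemma f1_le_one (tG t' : Finset (N × ℕ × ℕ)) : f1 tG t' ≤ 1 := by
  by_cases h : t' ∩ tG = ∅
  · simp [f1, h]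
  · simp only [f1, if_neg h]
    have ha : 0 < ((t' ∩ tG).card : ℝ) := by
      exact_mod_cast Finset.card_pos.mpr (Finset.nonempty_iff_ne_empty.mpr h)
    obtain ⟨x, hx⟩ := Finset.nonempty_iff_ne_empty.mpr h
    have hgpos : 0 < ((tG.card : ℝ)) := by
      exact_mod_cast Finset.card_pos.mpr ⟨x, Finset.mem_of_mem_inter_right hx⟩
    have hppos : 0 < ((t'.card : ℝ)) := by
      exact_mod_cast Finset.card_pos.mpr ⟨x, Finset.mem_of_mem_inter_left hx⟩
    have hag : ((t' ∩ tG).card : ℝ) ≤ tG.card := by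
      exact_mod_cast Finset.card_le_card Finset.inter_subset_right
    have hap : ((t' ∩ tG).card : ℝ) ≤ t'.card := by
      exact_mod_cast Finset.card_le_card Finset.inter_subset_left
    set X := ((t' ∩ tG).card : ℝ) / tG.card with hX
    set Y := ((t' ∩ tG).card : ℝ) / t'.card with hY
    have hx0 : 0 < X := div_pos ha hgpos
    have hy0 : 0 < Y := div_pos ha hppos
    have hx1 : X ≤ 1 := (div_le_one hgpos).mpr hag
    have hy1 : Y ≤ 1 := (div_le_one hppos).mpr hap
    rw [div_le_one (by positivity)]
    nlinarith [mul_nonneg (sub_nonneg.mpr hx1) hy0.le,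
      mul_nonneg (sub_nonneg.mpr hy1) hx0.le]

lemma f1_self (tG : Finset (N × ℕ × ℕ)) (hne : tG.Nonempty) : f1 tG tG = 1 := by
  rw [f1, Finset.inter_self, if_neg (Finset.nonempty_iff_ne_empty.mp hne)]
  have hc : 0 < ((tG.card : ℝ)) := by
    exact_mod_cast Finset.card_pos.mpr hne
  rw [div_self hc.ne']
  norm_num

end AuxCompleteness

/-- Completeness at the initial configuration: `t*(initial) = t_G`, the gold
tree is derivable (`t_G ∈ D(initial)`), and the best achievable F1 from the
initial configuration is perfect: `F1(initial) = 1`. -/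
theorem initial_complete (n : ℕ) (hn : 1 ≤ n) (tG : Finset (N × ℕ × ℕ))
    (hG : IsGold n tG) :
    tstar tG (initial N) = tG ∧ tG ∈ Dset n (initial N) ∧
      configF1 n tG (initial N) = 1 := by
  have hD : tG ∈ Dset n (initial N) := by
    have hrun := parse_run n hn tG hG n 0 n (by omega) hn (le_refl n) 0 ⟨0, rfl⟩
      (by omega) [] ∅
    have hF : tG.filter (fun b => 0 ≤ b.2.1 ∧ b.2.2 ≤ n) = tG := by
      apply Finset.filter_true_of_mem
      intro b hb
      exact ⟨Nat.zero_le _, (hG.validSpans b hb).2⟩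
    rw [hF] at hrun
    simp only [List.nil_append, Finset.empty_union, Nat.sub_zero] at hrun
    have hz : 0 + (4 * n - 2) = 4 * n - 2 := by omega
    rw [hz] at hrun
    exact ⟨_, hrun, ⟨rfl, rfl⟩, rfl⟩
  have hne : tG.Nonempty := by
    obtain ⟨X, hX⟩ := hG.root
    exact ⟨_, hX⟩
  refine ⟨?_, hD, ?_⟩
  · simp [tstar, reach, initial]
  · rw [configF1]
    apply le_antisymm
    · apply Real.sSup_le
      · rintro x ⟨t', _, rfl⟩
        exact f1_le_one tG t'
      · norm_num
    · apply le_csSup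
      · exact ⟨1, by rintro x ⟨t', _, rfl⟩; exact f1_le_one tG t'⟩
      · exact ⟨tG, hD, f1_self tG hne⟩

end SpanParser
end

section
/- For every valid configuration c, the set of reachable trees D(c) is nonempty; in particular F1(c) = max over t' ∈ D(c) of F1(t') is well defined. -/
/-!
Formalization of the span-based Structure/Label transition parsing system of
Cross & Huang (2016), "Span-Based Constituency Parsing with a Structure-Label
System and Provably Optimal Dynamic Oracles".

A configuration is `(z, σ, t)` where `z` is the step number, `σ` the stack of
span boundaries and `t` the set of brackets built so far.  A bracket is a
triple `(X, i, j)` with `X` a nonterminal label and `i < j ≤ n` a span.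
-/

namespace SpanParser

variable {N : Type*}

variable [DecidableEq N]

/-- Invariant maintained by all valid configurations. -/
def Inv (n : ℕ) (c : Config N) : Prop :=
  (∃ l, c.σ = 0 :: l) ∧ topJ c.σ ≤ n ∧
  (Even c.z → c.z + 2 * c.σ.length = 4 * topJ c.σ + 2) ∧
  (¬Even c.z → c.z + 1 + 2 * c.σ.length = 4 * topJ c.σ + 2 ∧ 2 ≤ c.σ.length)

lemma topJ_append (l : List ℕ) (x : ℕ) : topJ (l ++ [x]) = x := by
  simp [topJ]

lemma dropLast_cons_of_ne_nil (x : ℕ) (l : List ℕ) (h : l ≠ []) :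
    (x :: l).dropLast = x :: l.dropLast := by
  cases l with
  | nil => simp at h
  | cons y t => rfl

lemma inv_step {n : ℕ} {c c' : Config N} (hinv : Inv n c) (hs : Step n c c') :
    Inv n c' := by
  obtain ⟨⟨l, hσ⟩, htop, heven, hodd⟩ := hinv
  obtain ⟨a, happ, rfl⟩ := hs
  cases a with
  | sh =>
    obtain ⟨hE, hne, hlt⟩ := happ
    have heq := heven hE
    refine ⟨⟨l ++ [topJ c.σ + 1], by simp [doAct, hσ]⟩, ?_, ?_, ?_⟩
    · simp [doAct, topJ_append]; omega
    · intro h; exfalso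
      simp [doAct] at h
      rw [Nat.even_add_one] at h; exact h hE
    · intro _
      simp [doAct, topJ_append, List.length_append]
      constructor
      · have : c.σ.length ≥ 1 := by rw [hσ]; simp
        omega
      · rw [hσ]; simp
  | comb =>
    obtain ⟨hE, hlen⟩ := happ
    have heq := heven hE
    have hl2 : 2 ≤ l.length := by
      rw [hσ] at hlen; simpa using hlen
    have hl1 : l ≠ [] := by intro h; rw [h] at hl2; simp at hl2
    have hdl : l.dropLast ≠ [] := by
      intro h
      have := (List.length_dropLast : l.dropLast.length = l.length - 1)
      rw [h] at this; simp at this; omega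
    have hdrop : c.σ.dropLast.dropLast = 0 :: l.dropLast.dropLast := by
      rw [hσ, dropLast_cons_of_ne_nil 0 l hl1, dropLast_cons_of_ne_nil 0 _ hdl]
    refine ⟨⟨l.dropLast.dropLast ++ [topJ c.σ], by simp [doAct, hdrop]⟩, ?_, ?_, ?_⟩
    · simp [doAct, topJ_append]; exact htop
    · intro h; exfalso
      simp [doAct] at h
      rw [Nat.even_add_one] at h; exact h hE
    · intro _
      have hlen' : (c.σ.dropLast.dropLast ++ [topJ c.σ]).length = c.σ.length - 1 := by
        simp [List.length_append, List.length_dropLast]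
        omega
      simp only [doAct, topJ_append]
      rw [hlen']
      omega
  | label X =>
    obtain ⟨hO, hlen⟩ := happ
    have hnE : ¬ Even c.z := Nat.not_even_iff_odd.mpr hO
    have heq := hodd hnE
    refine ⟨⟨l, hσ⟩, htop, ?_, ?_⟩
    · intro _; simp only [doAct]; omega
    · intro h; exfalso
      simp only [doAct] at h
      rw [Nat.even_add_one] at h
      exact h (Nat.not_even_iff_odd.mpr hO)
  | nolabel =>
    obtain ⟨hO, hlen, _⟩ := happ
    have hnE : ¬ Even c.z := Nat.not_even_iff_odd.mpr hO
    have heq := hodd hnE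
    refine ⟨⟨l, hσ⟩, htop, ?_, ?_⟩
    · intro _; simp only [doAct]; omega
    · intro h; exfalso
      simp only [doAct] at h
      rw [Nat.even_add_one] at h
      exact h (Nat.not_even_iff_odd.mpr hO)

lemma inv_valid {n : ℕ} {c : Config N} (hc : Valid n c) : Inv n c := by
  induction hc with
  | refl =>
    refine ⟨⟨[], rfl⟩, ?_, ?_, ?_⟩
    · simp [initial, topJ]
    · intro _; simp [initial, topJ]
    · intro h; exact absurd (by simp [initial] : Even (initial N).z) h
  | tail hr hs ih => exact inv_step ih hs

lemma complete (n : ℕ) (hn : 1 ≤ n) :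
    ∀ k (c : Config N), Inv n c → 4 * n ≤ c.z + k →
    ∃ c', Reaches n c c' ∧ Final n c' := by
  intro k
  induction k with
  | zero =>
    intro c hinv hk
    exfalso
    obtain ⟨⟨l, hσ⟩, htop, heven, hodd⟩ := hinv
    have hL : c.σ.length = l.length + 1 := by rw [hσ]; simp
    by_cases hE : Even c.z
    · have heq := heven hE
      -- z = 4n forces length 1, top = n, but then top = 0
      have hl0 : l = [] := by
        by_contra h
        have : 1 ≤ l.length := List.length_pos_iff.mpr h
        omega
      have : topJ c.σ = 0 := by rw [hσ, hl0]; simp [topJ]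
      omega
    · have heq := hodd hE
      omega
  | succ k ih =>
    intro c hinv hk
    by_cases hE : Even c.z
    · obtain ⟨⟨l, hσ⟩, htop, heven, hodd⟩ := hinv
      have hL : c.σ.length = l.length + 1 := by rw [hσ]; simp
      have heq := heven hE
      by_cases hfin : c.σ.length = 2 ∧ topJ c.σ = n
      · -- final configuration
        obtain ⟨hlen2, htopn⟩ := hfin
        have hl1 : l.length = 1 := by omega
        obtain ⟨a, ha⟩ := List.length_eq_one_iff.mp hl1
        have hσ2 : c.σ = [0, a] := by rw [hσ, ha]
        have hta : topJ c.σ = a := by rw [hσ2]; simp [topJ]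
        have han : a = n := by omega
        refine ⟨c, Relation.ReflTransGen.refl, ?_, ?_⟩
        · rw [hσ2, han]
        · omega
      · by_cases htlt : topJ c.σ < n
        · -- shift
          have happ : App n c Action.sh := ⟨hE, by rw [hσ]; simp, htlt⟩
          have hinv' := inv_step ⟨⟨l, hσ⟩, htop, heven, hodd⟩ ⟨_, happ, rfl⟩
          obtain ⟨c', hr, hf⟩ := ih (doAct c Action.sh) hinv'
            (by simp [doAct]; omega)
          exact ⟨c', Relation.ReflTransGen.head ⟨_, happ, rfl⟩ hr, hf⟩
        · -- top = n, must combine; length ≥ 3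
          have htn : topJ c.σ = n := by omega
          have hl3 : 3 ≤ c.σ.length := by
            by_contra h
            push_neg at h
            have h2 : c.σ.length = 1 ∨ c.σ.length = 2 := by omega
            rcases h2 with h2 | h2
            · have hl0 : l = [] := List.length_eq_zero_iff.mp (by omega)
              have : topJ c.σ = 0 := by rw [hσ, hl0]; simp [topJ]
              omega
            · exact hfin ⟨h2, htn⟩
          have happ : App n c Action.comb := ⟨hE, hl3⟩
          have hinv' := inv_step ⟨⟨l, hσ⟩, htop, heven, hodd⟩ ⟨_, happ, rfl⟩
          obtain ⟨c', hr, hf⟩ := ih (doAct c Action.comb) hinv'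
            (by simp [doAct]; omega)
          exact ⟨c', Relation.ReflTransGen.head ⟨_, happ, rfl⟩ hr, hf⟩
    · -- odd step: nolabel
      obtain ⟨⟨l, hσ⟩, htop, heven, hodd⟩ := hinv
      have heq := hodd hE
      have hO : Odd c.z := Nat.not_even_iff_odd.mp hE
      have happ : App n c Action.nolabel := ⟨hO, heq.2, by omega⟩
      have hinv' := inv_step ⟨⟨l, hσ⟩, htop, heven, hodd⟩ ⟨_, happ, rfl⟩
      obtain ⟨c', hr, hf⟩ := ih (doAct c Action.nolabel) hinv'
        (by simp [doAct]; omega)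
      exact ⟨c', Relation.ReflTransGen.head ⟨_, happ, rfl⟩ hr, hf⟩

lemma card_reaches {n : ℕ} {c c' : Config N} (h : Reaches n c c') :
    c'.t.card + c.z ≤ c.t.card + c'.z := by
  induction h with
  | refl => omega
  | @tail b c'' hr hs ih =>
    obtain ⟨a, happ, rfl⟩ := hs
    cases a with
    | sh => simp only [doAct]; omega
    | comb => simp only [doAct]; omega
    | label X =>
      simp only [doAct]
      have := Finset.card_insert_le (X, topI b.σ, topJ b.σ) b.t
      omega
    | nolabel => simp only [doAct]; omega

/-- For every valid configuration `c`, the set of reachable trees `D(c)` is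
nonempty; in particular `F1(c) = max_{t' ∈ D(c)} F1(t')` is well defined
(the maximum is attained). -/
theorem dset_nonempty (n : ℕ) (hn : 1 ≤ n) (tG : Finset (N × ℕ × ℕ))
    (hG : IsGold n tG) (c : Config N) (hc : Valid n c) :
    (Dset n c).Nonempty ∧ ∃ x, IsGreatest (f1 tG '' Dset n c) x := by
  -- Nonemptiness
  have hinv := inv_valid hc
  obtain ⟨c', hr, hf⟩ := complete n hn (4 * n) c hinv (by omega)
  have hne : (Dset n c).Nonempty := ⟨c'.t, c', hr, hf, rfl⟩
  refine ⟨hne, ?_⟩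
  -- Finiteness of the f1 image
  set B := c.t.card + 4 * n with hB
  set F : ℕ × ℕ → ℝ := fun p =>
    if p.1 = 0 then 0
    else (2 * ((p.1 : ℝ) / (tG.card : ℝ)) * ((p.1 : ℝ) / (p.2 : ℝ))) /
      (((p.1 : ℝ) / (tG.card : ℝ)) + ((p.1 : ℝ) / (p.2 : ℝ))) with hF
  have hsub : f1 tG '' Dset n c ⊆ F '' (Set.Icc (0, 0) (tG.card, B)) := by
    rintro x ⟨t', ⟨cf, hrf, hff, hct⟩, rfl⟩
    refine ⟨((t' ∩ tG).card, t'.card), ?_, ?_⟩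
    · constructor
      · exact ⟨Nat.zero_le _, Nat.zero_le _⟩
      · constructor
        · exact Finset.card_le_card (Finset.inter_subset_right)
        · have hcard := card_reaches hrf
          have hz : cf.z = 4 * n - 2 := hff.2
          rw [hct] at hcard
          simp only [hB]; omega
    · simp only [hF, f1]
      by_cases h : t' ∩ tG = ∅
      · rw [if_pos h, if_pos (by rw [h]; simp)]
      · rw [if_neg h, if_neg (by simpa [Finset.card_eq_zero] using h)]
  have hfin : (f1 tG '' Dset n c).Finite :=
    Set.Finite.subset ((Set.finite_Icc _ _).image F) hsub
  have hne' : (f1 tG '' Dset n c).Nonempty := hne.image _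
  obtain ⟨x, hx, hmax⟩ := hfin.exists_maximalFor id _ hne'
  refine ⟨x, hx, fun y hy => ?_⟩
  rcases le_total y x with h | h
  · exact h
  · exact hmax hy h



end SpanParser
end
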